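/- Let Ω = [0,1]×[0,1], ε ∈ ℝ, let b = (b₁,b₂) : Ω → ℝ² be continuously differentiable, f : Ω → ℝ continuous, and φ : Ω → ℝ twice continuously differentiable, with −(b·∇)(∇·(bφ)) + ε·φ = f on Ω and (b·ν)∇·(bφ) = 0 on ∂Ω (i.e. b₁·∇·(bφ) = 0 on the faces x = 0, 1 and b₂·∇·(bφ) = 0 on the faces y = 0, 1). Then for every continuously differentiable r : Ω → ℝ satisfying ∇·(br) = 0 on Ω, one has ∫_Ω (ε·φ − f) r dx dy = 0. -/

import Mathlib

open Set MeasureTheory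

/-- Continuity of a vertical slice of a two-variable continuous function. -/
lemma sliceY_contOn {F : ℝ → ℝ → ℝ}
    (hF : ContinuousOn (fun pt : ℝ × ℝ => F pt.1 pt.2) (Icc (0:ℝ) 1 ×ˢ Icc (0:ℝ) 1))
    {x : ℝ} (hx : x ∈ Icc (0:ℝ) 1) :
    ContinuousOn (fun t => F x t) (Icc (0:ℝ) 1) :=
  hF.comp (Continuous.continuousOn (by fun_prop) :
      ContinuousOn (fun t : ℝ => ((x, t) : ℝ × ℝ)) (Icc 0 1))
    (fun t ht => mem_prod.2 ⟨hx, ht⟩)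

/-- Continuity of a horizontal slice of a two-variable continuous function. -/
lemma sliceX_contOn {F : ℝ → ℝ → ℝ}
    (hF : ContinuousOn (fun pt : ℝ × ℝ => F pt.1 pt.2) (Icc (0:ℝ) 1 ×ˢ Icc (0:ℝ) 1))
    {y : ℝ} (hy : y ∈ Icc (0:ℝ) 1) :
    ContinuousOn (fun t => F t y) (Icc (0:ℝ) 1) :=
  hF.comp (Continuous.continuousOn (by fun_prop) :
      ContinuousOn (fun t : ℝ => ((t, y) : ℝ × ℝ)) (Icc 0 1))
    (fun t ht => mem_prod.2 ⟨ht, hy⟩)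

/-- FTC on [0,1] from one-sided (within-Icc) derivatives with continuous derivative. -/
lemma ftc01 {g g' : ℝ → ℝ}
    (hg : ∀ t ∈ Icc (0:ℝ) 1, HasDerivWithinAt g (g' t) (Icc (0:ℝ) 1) t)
    (hc : ContinuousOn g' (Icc (0:ℝ) 1)) :
    ∫ t in (0:ℝ)..1, g' t = g 1 - g 0 := by
  apply intervalIntegral.integral_eq_sub_of_hasDeriv_right_of_le zero_le_one
  · exact fun t ht => (hg t ht).continuousWithinAt
  · intro t ht
    exact ((hg t (Ioo_subset_Icc_self ht)).hasDerivAt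
      (Icc_mem_nhds ht.1 ht.2)).hasDerivWithinAt
  · exact (hc.mono (by rw [uIcc_of_le zero_le_one])).intervalIntegrable


/-- The equation determining the `K`-component of the solution: if `φ` solves
`-(b·∇)(∇·(bφ)) + εφ = f` on the unit square with boundary condition `(b·ν)∇·(bφ) = 0`,
then `∫_Ω (εφ - f) r = 0` for every `C¹` function `r` with `∇·(br) = 0` on `Ω`.
Here `w = ∇·(bφ)` (expanded by the product rule) with partial derivatives `wX`, `wY`, and
all functions are encoded with their partial-derivative data (`b1x = ∂b₁/∂x`, etc.). -/

theorem statement11 (ε : ℝ)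
    (b1 b2 b1x b1y b2x b2y f phi phiX phiY w wX wY : ℝ → ℝ → ℝ)
    (hb1x : ∀ x ∈ Icc (0:ℝ) 1, ∀ y ∈ Icc (0:ℝ) 1,
      HasDerivWithinAt (fun t => b1 t y) (b1x x y) (Icc (0:ℝ) 1) x)
    (hb1y : ∀ x ∈ Icc (0:ℝ) 1, ∀ y ∈ Icc (0:ℝ) 1,
      HasDerivWithinAt (fun t => b1 x t) (b1y x y) (Icc (0:ℝ) 1) y)
    (hb2x : ∀ x ∈ Icc (0:ℝ) 1, ∀ y ∈ Icc (0:ℝ) 1,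
      HasDerivWithinAt (fun t => b2 t y) (b2x x y) (Icc (0:ℝ) 1) x)
    (hb2y : ∀ x ∈ Icc (0:ℝ) 1, ∀ y ∈ Icc (0:ℝ) 1,
      HasDerivWithinAt (fun t => b2 x t) (b2y x y) (Icc (0:ℝ) 1) y)
    (hphiX : ∀ x ∈ Icc (0:ℝ) 1, ∀ y ∈ Icc (0:ℝ) 1,
      HasDerivWithinAt (fun t => phi t y) (phiX x y) (Icc (0:ℝ) 1) x)
    (hphiY : ∀ x ∈ Icc (0:ℝ) 1, ∀ y ∈ Icc (0:ℝ) 1,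
      HasDerivWithinAt (fun t => phi x t) (phiY x y) (Icc (0:ℝ) 1) y)
    -- w = ∇·(bφ) = ∂x(b₁φ) + ∂y(b₂φ), expanded by the product rule
    (hw : ∀ x ∈ Icc (0:ℝ) 1, ∀ y ∈ Icc (0:ℝ) 1,
      w x y = b1x x y * phi x y + b1 x y * phiX x y
        + b2y x y * phi x y + b2 x y * phiY x y)
    (hwX : ∀ x ∈ Icc (0:ℝ) 1, ∀ y ∈ Icc (0:ℝ) 1,
      HasDerivWithinAt (fun t => w t y) (wX x y) (Icc (0:ℝ) 1) x)
    (hwY : ∀ x ∈ Icc (0:ℝ) 1, ∀ y ∈ Icc (0:ℝ) 1,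
      HasDerivWithinAt (fun t => w x t) (wY x y) (Icc (0:ℝ) 1) y)
    (hcont : ∀ F ∈ ({b1, b2, b1x, b1y, b2x, b2y, f, phi, phiX, phiY, w, wX, wY} :
        Set (ℝ → ℝ → ℝ)),
      ContinuousOn (fun pt : ℝ × ℝ => F pt.1 pt.2) (Icc (0:ℝ) 1 ×ˢ Icc (0:ℝ) 1))
    -- (a) the PDE : -(b·∇)(∇·(bφ)) + εφ = f on Ω
    (hpde : ∀ x ∈ Icc (0:ℝ) 1, ∀ y ∈ Icc (0:ℝ) 1,
      -(b1 x y * wX x y + b2 x y * wY x y) + ε * phi x y = f x y)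
    -- (b) the boundary condition (b·ν)∇·(bφ) = 0 on ∂Ω
    (hbdx : ∀ y ∈ Icc (0:ℝ) 1, b1 0 y * w 0 y = 0 ∧ b1 1 y * w 1 y = 0)
    (hbdy : ∀ x ∈ Icc (0:ℝ) 1, b2 x 0 * w x 0 = 0 ∧ b2 x 1 * w x 1 = 0) :
    ∀ r rX rY : ℝ → ℝ → ℝ,
      (∀ x ∈ Icc (0:ℝ) 1, ∀ y ∈ Icc (0:ℝ) 1,
        HasDerivWithinAt (fun t => r t y) (rX x y) (Icc (0:ℝ) 1) x) →
      (∀ x ∈ Icc (0:ℝ) 1, ∀ y ∈ Icc (0:ℝ) 1,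
        HasDerivWithinAt (fun t => r x t) (rY x y) (Icc (0:ℝ) 1) y) →
      (∀ F ∈ ({r, rX, rY} : Set (ℝ → ℝ → ℝ)),
        ContinuousOn (fun pt : ℝ × ℝ => F pt.1 pt.2) (Icc (0:ℝ) 1 ×ˢ Icc (0:ℝ) 1)) →
      -- ∇·(br) = 0 on Ω
      (∀ x ∈ Icc (0:ℝ) 1, ∀ y ∈ Icc (0:ℝ) 1,
        b1x x y * r x y + b1 x y * rX x y + b2y x y * r x y + b2 x y * rY x y = 0) →
      ∫ x in (0:ℝ)..1, ∫ y in (0:ℝ)..1, (ε * phi x y - f x y) * r x y = 0 := by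
  intro r rX rY hrX hrY hrc hdiv
  -- continuity facts
  have cb1 := hcont b1 (by simp)
  have cb2 := hcont b2 (by simp)
  have cb1x := hcont b1x (by simp)
  have cb2y := hcont b2y (by simp)
  have cw := hcont w (by simp)
  have cwX := hcont wX (by simp)
  have cwY := hcont wY (by simp)
  have cr := hrc r (by simp)
  have crX := hrc rX (by simp)
  have crY := hrc rY (by simp)
  set S : Set ℝ := Icc (0:ℝ) 1 with hS
  -- Gx = ∂x (b1 * w * r), Hy = ∂y (b2 * w * r)
  set Gx : ℝ → ℝ → ℝ := fun x y =>
    b1x x y * w x y * r x y + b1 x y * wX x y * r x y + b1 x y * w x y * rX x y with hGxdef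
  set Hy : ℝ → ℝ → ℝ := fun x y =>
    b2y x y * w x y * r x y + b2 x y * wY x y * r x y + b2 x y * w x y * rY x y with hHydef
  have hGx : ∀ x ∈ S, ∀ y ∈ S,
      HasDerivWithinAt (fun t => b1 t y * w t y * r t y) (Gx x y) S x := by
    intro x hx y hy
    have h : HasDerivWithinAt (fun t => b1 t y * w t y * r t y) _ S x := ((hb1x x hx y hy).mul (hwX x hx y hy)).mul (hrX x hx y hy)
    convert h using 1
    simp only [hGxdef, Pi.mul_apply]; ring
  have hHy : ∀ x ∈ S, ∀ y ∈ S,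
      HasDerivWithinAt (fun t => b2 x t * w x t * r x t) (Hy x y) S y := by
    intro x hx y hy
    have h : HasDerivWithinAt (fun t => b2 x t * w x t * r x t) _ S y := ((hb2y x hx y hy).mul (hwY x hx y hy)).mul (hrY x hx y hy)
    convert h using 1
    simp only [hHydef, Pi.mul_apply]; ring
  have cGx : ContinuousOn (fun pt : ℝ × ℝ => Gx pt.1 pt.2) (S ×ˢ S) := by
    exact ((cb1x.mul cw).mul cr).add (((cb1.mul cwX).mul cr).add ((cb1.mul cw).mul crX)) |>.congr
      (fun pt _ => by simp only [hGxdef, Pi.mul_apply, Pi.add_apply]; ring)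
  have cHy : ContinuousOn (fun pt : ℝ × ℝ => Hy pt.1 pt.2) (S ×ˢ S) := by
    exact ((cb2y.mul cw).mul cr).add (((cb2.mul cwY).mul cr).add ((cb2.mul cw).mul crY)) |>.congr
      (fun pt _ => by simp only [hHydef, Pi.mul_apply, Pi.add_apply]; ring)
  -- pointwise identity: (εφ - f) r = Gx + Hy
  have key : ∀ x ∈ S, ∀ y ∈ S,
      (ε * phi x y - f x y) * r x y = Gx x y + Hy x y := by
    intro x hx y hy
    have h1 := hpde x hx y hy
    have h2 := hdiv x hx y hy
    simp only [hGxdef, hHydef]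
    linear_combination r x y * h1 - w x y * h2
  -- Step 1: inner integral reduces to ∫ Gx
  have inner : ∀ x ∈ S, (∫ y in (0:ℝ)..1, (ε * phi x y - f x y) * r x y)
      = ∫ y in (0:ℝ)..1, Gx x y := by
    intro x hx
    have e1 : (∫ y in (0:ℝ)..1, (ε * phi x y - f x y) * r x y)
        = ∫ y in (0:ℝ)..1, (Gx x y + Hy x y) := by
      apply intervalIntegral.integral_congr
      intro y hy
      rw [uIcc_of_le zero_le_one] at hy
      exact key x hx y hy
    have iGx : IntervalIntegrable (fun y => Gx x y) volume 0 1 :=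
      ((sliceY_contOn cGx hx).mono (by rw [uIcc_of_le zero_le_one])).intervalIntegrable
    have iHy : IntervalIntegrable (fun y => Hy x y) volume 0 1 :=
      ((sliceY_contOn cHy hx).mono (by rw [uIcc_of_le zero_le_one])).intervalIntegrable
    have e2 : (∫ y in (0:ℝ)..1, Hy x y) = 0 := by
      have := ftc01 (g := fun t => b2 x t * w x t * r x t) (g' := fun t => Hy x t)
        (fun t ht => hHy x hx t ht) (sliceY_contOn cHy hx)
      rw [this]
      show b2 x 1 * w x 1 * r x 1 - b2 x 0 * w x 0 * r x 0 = 0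
      rw [(hbdy x hx).1, (hbdy x hx).2]
      ring
    rw [e1, intervalIntegral.integral_add iGx iHy, e2, add_zero]
  -- Step 2: column FTC for Gx
  have col : ∀ y ∈ S, (∫ x in (0:ℝ)..1, Gx x y) = 0 := by
    intro y hy
    have := ftc01 (g := fun t => b1 t y * w t y * r t y) (g' := fun t => Gx t y)
      (fun t ht => hGx t ht y hy) (sliceX_contOn cGx hy)
    rw [this]
    show b1 1 y * w 1 y * r 1 y - b1 0 y * w 0 y * r 0 y = 0
    rw [(hbdx y hy).1, (hbdx y hy).2]
    ring
  -- Fubini swap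
  have hInt : Integrable (Function.uncurry Gx)
      ((volume.restrict (Ioc (0:ℝ) 1)).prod (volume.restrict (Ioc (0:ℝ) 1))) := by
    rw [Measure.prod_restrict]
    have : IntegrableOn (Function.uncurry Gx) (S ×ˢ S) := by
      exact (cGx.integrableOn_compact (isCompact_Icc.prod isCompact_Icc))
    exact this.mono_set (prod_mono Ioc_subset_Icc_self Ioc_subset_Icc_self)
  have swap : (∫ x in (0:ℝ)..1, ∫ y in (0:ℝ)..1, Gx x y)
      = ∫ y in (0:ℝ)..1, ∫ x in (0:ℝ)..1, Gx x y := by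
    simp only [intervalIntegral.integral_of_le zero_le_one]
    exact integral_integral_swap hInt
  calc (∫ x in (0:ℝ)..1, ∫ y in (0:ℝ)..1, (ε * phi x y - f x y) * r x y)
      = ∫ x in (0:ℝ)..1, ∫ y in (0:ℝ)..1, Gx x y := by
        apply intervalIntegral.integral_congr
        intro x hx
        rw [uIcc_of_le zero_le_one] at hx
        exact inner x hx
    _ = ∫ y in (0:ℝ)..1, ∫ x in (0:ℝ)..1, Gx x y := swap
    _ = ∫ y in (0:ℝ)..1, (0:ℝ) := by
        apply intervalIntegral.integral_congr
        intro y hy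
        rw [uIcc_of_le zero_le_one] at hy
        exact col y hy
    _ = 0 := by simp
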